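/- arXiv:1610.01051 — 4 statements merged into one kernel-verified Lean document; each statement's English description precedes it below -/
import Mathlib

section
/- If A = U - V is a proper splitting of a real m×n matrix A (i.e., R(U) = R(A) and N(U) = N(A)), then I - U†V is nonsingular and A† = (I - U†V)⁻¹ U†, where † denotes the Moore-Penrose inverse. -/
open Matrix Polynomial

/-- `X` is the Moore-Penrose inverse of `A`. -/
def IsMP {m n : ℕ} (A : Matrix (Fin m) (Fin n) ℝ) (X : Matrix (Fin n) (Fin m) ℝ) : Prop :=
  A * X * A = A ∧ X * A * X = X ∧ (A * X)ᵀ = A * X ∧ (X * A)ᵀ = X * A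

/-- `A = U - V` is a proper splitting: `R(U)=R(A)` and `N(U)=N(A)`. -/
def ProperSplitting {m n : ℕ} (A U V : Matrix (Fin m) (Fin n) ℝ) : Prop :=
  A = U - V ∧ LinearMap.range U.mulVecLin = LinearMap.range A.mulVecLin ∧
    LinearMap.ker U.mulVecLin = LinearMap.ker A.mulVecLin

/-- `μ : ℂ` is an eigenvalue of the real matrix `M`. -/
def IsEigen {n : ℕ} (M : Matrix (Fin n) (Fin n) ℝ) (μ : ℂ) : Prop :=
  ((M.map (algebraMap ℝ ℂ)).charpoly).IsRoot μ

/-- The spectral radius of a real square matrix. -/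
noncomputable def specRad {n : ℕ} (M : Matrix (Fin n) (Fin n) ℝ) : ℝ :=
  sSup {r : ℝ | ∃ μ : ℂ, IsEigen M μ ∧ r = ‖μ‖}

/-- Entrywise nonnegativity. -/
def EntryNonneg {m n : ℕ} (A : Matrix (Fin m) (Fin n) ℝ) : Prop := ∀ i j, 0 ≤ A i j

/-- Entrywise order. -/
def EntryLE {m n : ℕ} (A B : Matrix (Fin m) (Fin n) ℝ) : Prop := ∀ i j, A i j ≤ B i j

/-- Entrywise strict order. -/
def EntryLT {m n : ℕ} (A B : Matrix (Fin m) (Fin n) ℝ) : Prop := ∀ i j, A i j < B i j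



lemma ext_mulVec {m n : ℕ} {M N : Matrix (Fin m) (Fin n) ℝ}
    (h : ∀ x, M *ᵥ x = N *ᵥ x) : M = N := by
  ext i j
  have := congrFun (h (Pi.single j 1)) i
  simpa [Matrix.mulVec_single] using this

theorem stmt0' {m n : ℕ} (A U V : Matrix (Fin m) (Fin n) ℝ)
    (Ad : Matrix (Fin n) (Fin m) ℝ) (Ud : Matrix (Fin n) (Fin m) ℝ)
    (hAV : A = U - V)
    (hR : LinearMap.range U.mulVecLin = LinearMap.range A.mulVecLin)
    (hK : LinearMap.ker U.mulVecLin = LinearMap.ker A.mulVecLin)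
    (hA1 : A * Ad * A = A) (hA2 : Ad * A * Ad = Ad)
    (hA3 : (A * Ad)ᵀ = A * Ad) (hA4 : (Ad * A)ᵀ = Ad * A)
    (hU1 : U * Ud * U = U) (hU2 : Ud * U * Ud = Ud)
    (hU3 : (U * Ud)ᵀ = U * Ud) (hU4 : (Ud * U)ᵀ = Ud * U) :
    IsUnit (1 - Ud * V) ∧ Ad = (1 - Ud * V)⁻¹ * Ud := by
  -- (a) U * Ud * A = A  (since R(A) ⊆ R(U))
  have haU : U * Ud * A = A := by
    apply ext_mulVec; intro x
    have hmem : A *ᵥ x ∈ LinearMap.range U.mulVecLin := by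
      rw [hR]; exact ⟨x, rfl⟩
    obtain ⟨y, hy⟩ := hmem
    rw [Matrix.mulVecLin_apply] at hy
    calc (U * Ud * A) *ᵥ x = U *ᵥ (Ud *ᵥ (A *ᵥ x)) := by simp only [← mulVec_mulVec]
      _ = U *ᵥ (Ud *ᵥ (U *ᵥ y)) := by rw [hy]
      _ = (U * Ud * U) *ᵥ y := by simp only [mulVec_mulVec, ← Matrix.mul_assoc]
      _ = U *ᵥ y := by rw [hU1]
      _ = A *ᵥ x := hy
  -- (b) A * Ad * U = U  (since R(U) ⊆ R(A))
  have hbA : A * Ad * U = U := by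
    apply ext_mulVec; intro x
    have hmem : U *ᵥ x ∈ LinearMap.range A.mulVecLin := by
      rw [← hR]; exact ⟨x, rfl⟩
    obtain ⟨y, hy⟩ := hmem
    rw [Matrix.mulVecLin_apply] at hy
    calc (A * Ad * U) *ᵥ x = A *ᵥ (Ad *ᵥ (U *ᵥ x)) := by simp only [← mulVec_mulVec]
      _ = A *ᵥ (Ad *ᵥ (A *ᵥ y)) := by rw [hy]
      _ = (A * Ad * A) *ᵥ y := by simp only [mulVec_mulVec, ← Matrix.mul_assoc]
      _ = A *ᵥ y := by rw [hA1]
      _ = U *ᵥ x := hy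
  -- (c) U * Ad * A = U  (since N(A) ⊆ N(U))
  have hc : U * Ad * A = U := by
    apply ext_mulVec; intro x
    have hker : (x - Ad *ᵥ (A *ᵥ x)) ∈ LinearMap.ker A.mulVecLin := by
      rw [LinearMap.mem_ker, Matrix.mulVecLin_apply, Matrix.mulVec_sub]
      simp only [mulVec_mulVec, ← Matrix.mul_assoc]
      rw [hA1, sub_self]
    rw [← hK, LinearMap.mem_ker, Matrix.mulVecLin_apply, Matrix.mulVec_sub] at hker
    have h0 : U *ᵥ (Ad *ᵥ (A *ᵥ x)) = U *ᵥ x := (sub_eq_zero.mp hker).symm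
    calc (U * Ad * A) *ᵥ x = U *ᵥ (Ad *ᵥ (A *ᵥ x)) := by simp only [← mulVec_mulVec]
      _ = U *ᵥ x := h0
  -- (d) A * Ud * U = A  (since N(U) ⊆ N(A))
  have hd : A * Ud * U = A := by
    apply ext_mulVec; intro x
    have hker : (x - Ud *ᵥ (U *ᵥ x)) ∈ LinearMap.ker U.mulVecLin := by
      rw [LinearMap.mem_ker, Matrix.mulVecLin_apply, Matrix.mulVec_sub]
      simp only [mulVec_mulVec, ← Matrix.mul_assoc]
      rw [hU1, sub_self]
    rw [hK, LinearMap.mem_ker, Matrix.mulVecLin_apply, Matrix.mulVec_sub] at hker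
    have h0 : A *ᵥ (Ud *ᵥ (U *ᵥ x)) = A *ᵥ x := (sub_eq_zero.mp hker).symm
    calc (A * Ud * U) *ᵥ x = A *ᵥ (Ud *ᵥ (U *ᵥ x)) := by simp only [← mulVec_mulVec]
      _ = A *ᵥ x := h0
  -- e1 : A * Ad = U * Ud
  have h1 : A * Ad = U * Ud * (A * Ad) := by rw [← Matrix.mul_assoc, haU]
  have h2 : A * Ad = (A * Ad) * (U * Ud) := by
    have t := congrArg Matrix.transpose h1
    rw [Matrix.transpose_mul (U * Ud) (A * Ad), hA3, hU3] at t
    exact t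
  have h3 : U * Ud = (A * Ad) * (U * Ud) := by rw [← Matrix.mul_assoc, hbA]
  have e1 : A * Ad = U * Ud := h2.trans h3.symm
  -- e2 : Ad * A = Ud * U
  have k1 : Ud * U = (Ud * U) * (Ad * A) := by
    rw [← Matrix.mul_assoc, Matrix.mul_assoc Ud U Ad, Matrix.mul_assoc Ud (U * Ad) A, hc]
  have k2 : Ud * U = (Ad * A) * (Ud * U) := by
    have t := congrArg Matrix.transpose k1
    rw [Matrix.transpose_mul (Ud * U) (Ad * A), hU4, hA4] at t
    exact t
  have k3 : Ad * A = (Ad * A) * (Ud * U) := by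
    rw [← Matrix.mul_assoc, Matrix.mul_assoc Ad A Ud, Matrix.mul_assoc Ad (A * Ud) U, hd]
  have e2 : Ad * A = Ud * U := k3.trans k2.symm
  -- monomial reductions
  have m1 : Ad * A * (Ad * A) = Ad * A := by rw [← Matrix.mul_assoc, hA2]
  have m2 : Ad * A * (Ad * U) = Ad * U := by rw [← Matrix.mul_assoc, hA2]
  have m3 : Ud * A * (Ad * A) = Ud * A := by
    rw [← Matrix.mul_assoc, Matrix.mul_assoc Ud A Ad, Matrix.mul_assoc Ud (A * Ad) A, hA1]
  have m4 : Ud * A * (Ad * U) = Ad * A := by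
    rw [← Matrix.mul_assoc, Matrix.mul_assoc Ud A Ad, Matrix.mul_assoc Ud (A * Ad) U, hbA, ← e2]
  have n2 : Ad * A * (Ud * A) = Ud * A := by rw [e2, ← Matrix.mul_assoc, hU2]
  have n3 : Ad * U * (Ad * A) = Ad * U := by
    rw [← Matrix.mul_assoc, Matrix.mul_assoc Ad U Ad, Matrix.mul_assoc Ad (U * Ad) A, hc]
  have n4 : Ad * U * (Ud * A) = Ad * A := by
    rw [← Matrix.mul_assoc, Matrix.mul_assoc Ad U Ud, Matrix.mul_assoc Ad (U * Ud) A, haU]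
  have m5 : Ud * A * Ad = Ud := by rw [Matrix.mul_assoc, e1, ← Matrix.mul_assoc, hU2]
  -- L = 1 - Ud * V rewritten
  have hV : V = U - A := by rw [hAV]; abel
  have hL : (1 : Matrix (Fin n) (Fin n) ℝ) - Ud * V = 1 - Ad * A + Ud * A := by
    rw [hV, Matrix.mul_sub, e2]; abel
  set W : Matrix (Fin n) (Fin n) ℝ := 1 - Ad * A + Ad * U with hW
  have hLW : (1 - Ad * A + Ud * A) * W = 1 := by
    calc (1 - Ad * A + Ud * A) * W
        = 1 - Ad * A + Ad * U - Ad * A + Ad * A * (Ad * A) - Ad * A * (Ad * U)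
          + Ud * A * 1 - Ud * A * (Ad * A) + Ud * A * (Ad * U) := by
          rw [hW]
          simp only [Matrix.add_mul, Matrix.sub_mul, Matrix.mul_add, Matrix.mul_sub,
            Matrix.one_mul, Matrix.mul_one]
          abel
      _ = 1 := by rw [m1, m2, m3, m4, Matrix.mul_one]; abel
  have hWL : W * (1 - Ad * A + Ud * A) = 1 := by
    calc W * (1 - Ad * A + Ud * A)
        = 1 - Ad * A + Ud * A - Ad * A + Ad * A * (Ad * A) - Ad * A * (Ud * A)
          + Ad * U * 1 - Ad * U * (Ad * A) + Ad * U * (Ud * A) := by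
          rw [hW]
          simp only [Matrix.add_mul, Matrix.sub_mul, Matrix.mul_add, Matrix.mul_sub,
            Matrix.one_mul, Matrix.mul_one]
          abel
      _ = 1 := by rw [m1, n2, n3, n4, Matrix.mul_one]; abel
  have hLA : (1 - Ad * A + Ud * A) * Ad = Ud := by
    rw [Matrix.add_mul, Matrix.sub_mul, Matrix.one_mul, hA2, m5]
    abel
  have hLW0 : (1 - Ud * V) * W = 1 := by rw [hL]; exact hLW
  have hWL0 : W * (1 - Ud * V) = 1 := by rw [hL]; exact hWL
  have hLA0 : (1 - Ud * V) * Ad = Ud := by rw [hL]; exact hLA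
  refine ⟨⟨⟨1 - Ud * V, W, hLW0, hWL0⟩, rfl⟩, ?_⟩
  rw [Matrix.inv_eq_right_inv hLW0]
  calc Ad = (W * (1 - Ud * V)) * Ad := by rw [hWL0, Matrix.one_mul]
    _ = W * ((1 - Ud * V) * Ad) := by rw [Matrix.mul_assoc]
    _ = W * Ud := by rw [hLA0]

theorem stmt0 {m n : ℕ} (A U V : Matrix (Fin m) (Fin n) ℝ)
    (Ad : Matrix (Fin n) (Fin m) ℝ) (Ud : Matrix (Fin n) (Fin m) ℝ)
    (hps : ProperSplitting A U V) (hA : IsMP A Ad) (hU : IsMP U Ud) :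
    IsUnit (1 - Ud * V) ∧ Ad = (1 - Ud * V)⁻¹ * Ud := by
  obtain ⟨hAV, hR, hK⟩ := hps
  obtain ⟨hA1, hA2, hA3, hA4⟩ := hA
  obtain ⟨hU1, hU2, hU3, hU4⟩ := hU
  exact stmt0' A U V Ad Ud hAV hR hK hA1 hA2 hA3 hA4 hU1 hU2 hU3 hU4
end

section
/- If A = U - V is a proper splitting of a real m×n matrix A, then A = (I - VU†)U and A† = U†(I - VU†)⁻¹. -/
open Matrix Polynomial

private lemma mulVec_ext' {m n : ℕ} {M N : Matrix (Fin m) (Fin n) ℝ}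
    (h : ∀ v, M *ᵥ v = N *ᵥ v) : M = N := by
  ext i j
  have := congrFun (h (Pi.single j 1)) i
  simpa [Matrix.mulVec_single_one] using this

theorem stmt1 {m n : ℕ} (A U V : Matrix (Fin m) (Fin n) ℝ)
    (Ad : Matrix (Fin n) (Fin m) ℝ) (Ud : Matrix (Fin n) (Fin m) ℝ)
    (hps : ProperSplitting A U V) (hA : IsMP A Ad) (hU : IsMP U Ud) :
    A = (1 - V * Ud) * U ∧ Ad = Ud * (1 - V * Ud)⁻¹ := by
  obtain ⟨hAUV, hr, hk⟩ := hps
  obtain ⟨hA1, hA2, hA3, hA4⟩ := hA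
  obtain ⟨hU1, hU2, hU3, hU4⟩ := hU
  have hV : V = U - A := by rw [hAUV]; abel
  -- R(A) ⊆ R(U) gives U Ud A = A
  have hUUdA : U * Ud * A = A := by
    apply mulVec_ext'
    intro v
    have hmem : A *ᵥ v ∈ LinearMap.range U.mulVecLin := by
      rw [hr]; exact ⟨v, rfl⟩
    obtain ⟨y, hy⟩ := hmem
    simp only [Matrix.mulVecLin_apply] at hy
    calc (U * Ud * A) *ᵥ v = (U * Ud) *ᵥ (A *ᵥ v) := by rw [mulVec_mulVec]
      _ = (U * Ud) *ᵥ (U *ᵥ y) := by rw [hy]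
      _ = (U * Ud * U) *ᵥ y := by rw [mulVec_mulVec]
      _ = U *ᵥ y := by rw [hU1]
      _ = A *ᵥ v := hy
  -- R(U) ⊆ R(A) gives A Ad U = U
  have hAAdU : A * Ad * U = U := by
    apply mulVec_ext'
    intro v
    have hmem : U *ᵥ v ∈ LinearMap.range A.mulVecLin := by
      rw [← hr]; exact ⟨v, rfl⟩
    obtain ⟨y, hy⟩ := hmem
    simp only [Matrix.mulVecLin_apply] at hy
    calc (A * Ad * U) *ᵥ v = (A * Ad) *ᵥ (U *ᵥ v) := by rw [mulVec_mulVec]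
      _ = (A * Ad) *ᵥ (A *ᵥ y) := by rw [hy]
      _ = (A * Ad * A) *ᵥ y := by rw [mulVec_mulVec]
      _ = A *ᵥ y := by rw [hA1]
      _ = U *ᵥ v := hy
  -- N(U) ⊆ N(A) gives A Ud U = A
  have hAUdU : A * Ud * U = A := by
    apply mulVec_ext'
    intro v
    have h0 : U *ᵥ (v - (Ud * U) *ᵥ v) = 0 := by
      rw [Matrix.mulVec_sub, mulVec_mulVec, ← Matrix.mul_assoc, hU1, sub_self]
    have hker : v - (Ud * U) *ᵥ v ∈ LinearMap.ker A.mulVecLin := by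
      rw [← hk]
      simpa [Matrix.mulVecLin_apply] using h0
    have h0' : A *ᵥ (v - (Ud * U) *ᵥ v) = 0 := by
      simpa [Matrix.mulVecLin_apply] using hker
    rw [Matrix.mulVec_sub, mulVec_mulVec, ← Matrix.mul_assoc, sub_eq_zero] at h0'
    exact h0'.symm
  -- N(A) ⊆ N(U) gives U Ad A = U
  have hUAdA : U * Ad * A = U := by
    apply mulVec_ext'
    intro v
    have h0 : A *ᵥ (v - (Ad * A) *ᵥ v) = 0 := by
      rw [Matrix.mulVec_sub, mulVec_mulVec, ← Matrix.mul_assoc, hA1, sub_self]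
    have hker : v - (Ad * A) *ᵥ v ∈ LinearMap.ker U.mulVecLin := by
      rw [hk]
      simpa [Matrix.mulVecLin_apply] using h0
    have h0' : U *ᵥ (v - (Ad * A) *ᵥ v) = 0 := by
      simpa [Matrix.mulVecLin_apply] using hker
    rw [Matrix.mulVec_sub, mulVec_mulVec, ← Matrix.mul_assoc, sub_eq_zero] at h0'
    exact h0'.symm
  -- the two orthogonal projectors onto R(A) = R(U) coincide
  have hP : U * Ud = A * Ad := by
    have h1 : U * Ud * (A * Ad) = A * Ad := by
      rw [← Matrix.mul_assoc, hUUdA]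
    calc U * Ud = A * Ad * U * Ud := by rw [hAAdU]
      _ = (A * Ad)ᵀ * (U * Ud)ᵀ := by rw [hA3, hU3, Matrix.mul_assoc]
      _ = (U * Ud * (A * Ad))ᵀ := by rw [← transpose_mul]
      _ = (A * Ad)ᵀ := by rw [h1]
      _ = A * Ad := hA3
  -- part 1
  have part1 : A = (1 - V * Ud) * U := by
    have e : (1 - (U - A) * Ud) * U = U - U * Ud * U + A * Ud * U := by
      simp only [Matrix.sub_mul, Matrix.mul_sub, Matrix.add_mul, Matrix.mul_add,
        Matrix.one_mul, Matrix.mul_one]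
      abel
    rw [hV, e, hU1, hAUdU]
    abel
  refine ⟨part1, ?_⟩
  -- explicit inverse of 1 - V Ud
  set C : Matrix (Fin m) (Fin m) ℝ := 1 - U * Ud + U * Ad with hC
  have hB : 1 - V * Ud = 1 - U * Ud + A * Ud := by
    rw [hV]
    simp only [Matrix.sub_mul]
    abel
  have hBC : (1 - V * Ud) * C = 1 := by
    rw [hB, hC]
    have e : (1 - U * Ud + A * Ud) * (1 - U * Ud + U * Ad) =
        1 - U * Ud - U * Ud + U * Ud * (U * Ud) + U * Ad - U * Ud * (U * Ad)
          + A * Ud - A * Ud * (U * Ud) + A * Ud * (U * Ad) := by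
      simp only [Matrix.sub_mul, Matrix.mul_sub, Matrix.add_mul, Matrix.mul_add,
        Matrix.one_mul, Matrix.mul_one]
      abel
    have e1 : U * Ud * (U * Ud) = U * Ud := by
      rw [← Matrix.mul_assoc, Matrix.mul_assoc U Ud U, ← Matrix.mul_assoc, hU1]
    have e2 : U * Ud * (U * Ad) = U * Ad := by
      rw [← Matrix.mul_assoc, Matrix.mul_assoc U Ud U, ← Matrix.mul_assoc, hU1]
    have e3 : A * Ud * (U * Ud) = A * Ud := by
      rw [← Matrix.mul_assoc, Matrix.mul_assoc A Ud U, ← Matrix.mul_assoc, hAUdU]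
    have e4 : A * Ud * (U * Ad) = A * Ad := by
      rw [← Matrix.mul_assoc, Matrix.mul_assoc A Ud U, ← Matrix.mul_assoc, hAUdU]
    rw [e, e1, e2, e3, e4, ← hP]
    abel
  -- Ad * (1 - V Ud) = Ud
  have hUt : Uᵀ = Ad * A * Uᵀ := by
    calc Uᵀ = (U * (Ad * A))ᵀ := by rw [← Matrix.mul_assoc, hUAdA]
      _ = (Ad * A)ᵀ * Uᵀ := by rw [transpose_mul]
      _ = Ad * A * Uᵀ := by rw [hA4]
  have hi : Ad * A * Ud = Ud := by
    calc Ad * A * Ud = Ad * A * (Ud * U * Ud) := by rw [hU2]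
      _ = Ad * A * ((Ud * U)ᵀ * Ud) := by rw [hU4]
      _ = Ad * A * (Uᵀ * Udᵀ * Ud) := by rw [transpose_mul]
      _ = Ad * A * Uᵀ * (Udᵀ * Ud) := by
          rw [Matrix.mul_assoc (Ad * A), Matrix.mul_assoc Uᵀ]
      _ = Uᵀ * (Udᵀ * Ud) := by rw [← hUt]
      _ = Uᵀ * Udᵀ * Ud := by rw [Matrix.mul_assoc]
      _ = (Ud * U)ᵀ * Ud := by rw [transpose_mul]
      _ = Ud * U * Ud := by rw [hU4]
      _ = Ud := hU2
  have hAdB : Ad * (1 - V * Ud) = Ud := by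
    rw [hB]
    have e : Ad * (1 - U * Ud + A * Ud) = Ad - Ad * (U * Ud) + Ad * (A * Ud) := by
      simp only [Matrix.sub_mul, Matrix.mul_sub, Matrix.add_mul, Matrix.mul_add,
        Matrix.one_mul, Matrix.mul_one]
    have e1 : Ad * (U * Ud) = Ad := by
      rw [hP, ← Matrix.mul_assoc, hA2]
    have e2 : Ad * (A * Ud) = Ud := by
      rw [← Matrix.mul_assoc, hi]
    rw [e, e1, e2]
    abel
  have hinv : (1 - V * Ud)⁻¹ = C := Matrix.inv_eq_right_inv hBC
  calc Ad = Ad * ((1 - V * Ud) * C) := by rw [hBC, Matrix.mul_one]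
    _ = Ad * (1 - V * Ud) * C := by rw [Matrix.mul_assoc]
    _ = Ud * C := by rw [hAdB]
    _ = Ud * (1 - V * Ud)⁻¹ := by rw [hinv]
end

section
/- Let A = U - V be a proper splitting of A ∈ ℝ^{m×n}. If λ is an eigenvalue of A†V, then μ = λ/(1+λ) is an eigenvalue of U†V; conversely, if μ is an eigenvalue of U†V, then λ = μ/(1-μ) is an eigenvalue of A†V. -/
open Matrix Polynomial

section
variable {m n : ℕ} {A U V : Matrix (Fin m) (Fin n) ℝ}
  {Ad Ud : Matrix (Fin n) (Fin m) ℝ}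

lemma mulVec_ext {a b : ℕ} {M N : Matrix (Fin a) (Fin b) ℝ}
    (h : ∀ x, M.mulVec x = N.mulVec x) : M = N := by
  ext i j
  simpa [Matrix.mulVec_single] using congrFun (h (Pi.single j 1)) i

lemma key_proj (hA1 : A * Ad * A = A) (hA2 : Ad * A * Ad = Ad)
    (hA3 : (A * Ad)ᵀ = A * Ad) (hA4 : (Ad * A)ᵀ = Ad * A)
    (hU1 : U * Ud * U = U) (hU2 : Ud * U * Ud = Ud)
    (hU3 : (U * Ud)ᵀ = U * Ud) (hU4 : (Ud * U)ᵀ = Ud * U)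
    (hrange : LinearMap.range U.mulVecLin = LinearMap.range A.mulVecLin)
    (hker : LinearMap.ker U.mulVecLin = LinearMap.ker A.mulVecLin) :
    A * Ad = U * Ud ∧ Ad * A = Ud * U := by
  have hrg : ∀ x, ∃ y, A.mulVec y = U.mulVec x := by
    intro x
    have : U.mulVecLin x ∈ LinearMap.range A.mulVecLin := hrange ▸ ⟨x, rfl⟩
    obtain ⟨y, hy⟩ := this
    exact ⟨y, hy⟩
  have hrg' : ∀ x, ∃ y, U.mulVec y = A.mulVec x := by
    intro x
    have : A.mulVecLin x ∈ LinearMap.range U.mulVecLin := hrange ▸ ⟨x, rfl⟩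
    obtain ⟨y, hy⟩ := this
    exact ⟨y, hy⟩
  have hkr : ∀ x, U.mulVec x = 0 → A.mulVec x = 0 := by
    intro x hx
    have : x ∈ LinearMap.ker A.mulVecLin := hker ▸ hx
    exact this
  have key1 : A * Ad * U = U := by
    apply mulVec_ext; intro x
    obtain ⟨y, hy⟩ := hrg x
    simp only [← Matrix.mulVec_mulVec]
    rw [← hy]
    simp only [Matrix.mulVec_mulVec, ← Matrix.mul_assoc]
    rw [hA1]
  have key2 : U * Ud * A = A := by
    apply mulVec_ext; intro x
    obtain ⟨y, hy⟩ := hrg' x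
    simp only [← Matrix.mulVec_mulVec]
    rw [← hy]
    simp only [Matrix.mulVec_mulVec, ← Matrix.mul_assoc]
    rw [hU1]
  have key3 : Ad * A * (Ud * U) = Ad * A := by
    apply mulVec_ext; intro x
    have hw : A.mulVec (x - (Ud * U).mulVec x) = 0 := by
      apply hkr
      rw [Matrix.mulVec_sub]
      simp only [Matrix.mulVec_mulVec, ← Matrix.mul_assoc]
      rw [hU1, sub_self]
    rw [Matrix.mulVec_sub, sub_eq_zero] at hw
    simp only [← Matrix.mulVec_mulVec] at hw ⊢
    rw [← hw]
  have key4 : Ud * U * (Ad * A) = Ud * U := by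
    apply mulVec_ext; intro x
    have hw : U.mulVec (x - (Ad * A).mulVec x) = 0 := by
      have h0 : A.mulVec (x - (Ad * A).mulVec x) = 0 := by
        rw [Matrix.mulVec_sub]
        simp only [Matrix.mulVec_mulVec, ← Matrix.mul_assoc]
        rw [hA1, sub_self]
      have hx : x - (Ad * A).mulVec x ∈ LinearMap.ker U.mulVecLin := hker ▸ h0
      exact hx
    rw [Matrix.mulVec_sub, sub_eq_zero] at hw
    simp only [← Matrix.mulVec_mulVec] at hw ⊢
    rw [← hw]
  constructor
  · have h1 : (U * Ud) * (A * Ad) = A * Ad := by rw [← Matrix.mul_assoc, key2]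
    have h2 : (A * Ad) * (U * Ud) = U * Ud := by rw [← Matrix.mul_assoc, key1]
    have h := congrArg Matrix.transpose h1
    rw [Matrix.transpose_mul, hA3, hU3] at h
    rw [← h2, h]
  · have h := congrArg Matrix.transpose key4
    rw [Matrix.transpose_mul, hA4, hU4, key3] at h
    exact h
end


lemma isRoot_charpoly_iff {k : ℕ} (M : Matrix (Fin k) (Fin k) ℂ) (μ : ℂ) :
    M.charpoly.IsRoot μ ↔ ∃ v, v ≠ 0 ∧ M.mulVec v = μ • v := by
  have h1 : M.charpoly.eval μ = (μ • (1 : Matrix (Fin k) (Fin k) ℂ) - M).det := by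
    rw [Matrix.charpoly, ← Polynomial.coe_evalRingHom, RingHom.map_det]
    congr 1
    ext i j
    by_cases h : i = j <;>
      simp [charmatrix_apply, h, Matrix.one_apply, Matrix.diagonal_apply]
  rw [IsRoot, h1, ← Matrix.exists_mulVec_eq_zero_iff]
  constructor
  · rintro ⟨v, hv, h⟩
    refine ⟨v, hv, ?_⟩
    rw [Matrix.sub_mulVec, Matrix.smul_mulVec, Matrix.one_mulVec, sub_eq_zero] at h
    exact h.symm
  · rintro ⟨v, hv, h⟩
    refine ⟨v, hv, ?_⟩
    rw [Matrix.sub_mulVec, Matrix.smul_mulVec, Matrix.one_mulVec, h, sub_self]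


theorem stmt2 {m n : ℕ} (A U V : Matrix (Fin m) (Fin n) ℝ)
    (Ad : Matrix (Fin n) (Fin m) ℝ) (Ud : Matrix (Fin n) (Fin m) ℝ)
    (hps : ProperSplitting A U V) (hA : IsMP A Ad) (hU : IsMP U Ud) :
    (∀ lam : ℂ, IsEigen (Ad * V) lam → IsEigen (Ud * V) (lam / (1 + lam))) ∧
    (∀ mu : ℂ, IsEigen (Ud * V) mu → IsEigen (Ad * V) (mu / (1 - mu))) := by
  obtain ⟨hAUV, hrange, hker⟩ := hps
  obtain ⟨hA1, hA2, hA3, hA4⟩ := hA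
  obtain ⟨hU1, hU2, hU3, hU4⟩ := hU
  obtain ⟨hP, hQ⟩ := key_proj hA1 hA2 hA3 hA4 hU1 hU2 hU3 hU4 hrange hker
  have hV : V = U - A := by rw [hAUV]; exact (sub_sub_cancel U V).symm
  have e1 : Ad * U * Ud = Ad := by
    calc Ad * U * Ud = Ad * (U * Ud) := Matrix.mul_assoc Ad U Ud
    _ = Ad * (A * Ad) := by rw [hP]
    _ = Ad * A * Ad := (Matrix.mul_assoc Ad A Ad).symm
    _ = Ad := hA2
  have e2 : Ad * A * Ud = Ud := by rw [hQ, hU2]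
  have rel1 : Ad * V * Ud = Ad - Ud := by
    rw [hV, Matrix.mul_sub, Matrix.sub_mul, e1, e2]
  have e3 : Ud * U * Ad = Ad := by rw [← hQ, hA2]
  have e4 : Ud * A * Ad = Ud := by
    calc Ud * A * Ad = Ud * (A * Ad) := Matrix.mul_assoc Ud A Ad
    _ = Ud * (U * Ud) := by rw [hP]
    _ = Ud * U * Ud := (Matrix.mul_assoc Ud U Ud).symm
    _ = Ud := hU2
  have rel2 : Ud * V * Ad = Ad - Ud := by
    rw [hV, Matrix.mul_sub, Matrix.sub_mul, e3, e4]
  have idM : Ad * V = Ud * V + (Ad * V) * (Ud * V) := by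
    have h := congrArg (fun X => X * V) rel1
    simp only [Matrix.sub_mul, Matrix.mul_assoc] at h
    rw [Matrix.mul_assoc, h]
    abel
  have idN : Ad * V = Ud * V + (Ud * V) * (Ad * V) := by
    have h := congrArg (fun X => X * V) rel2
    simp only [Matrix.sub_mul, Matrix.mul_assoc] at h
    rw [Matrix.mul_assoc, h]
    abel
  set f := algebraMap ℝ ℂ with hf
  set Mc := (Ad * V).map f with hMcd
  set Nc := (Ud * V).map f with hNcd
  have idMc : Mc = Nc + Mc * Nc := by
    rw [hMcd, hNcd, ← Matrix.map_mul, ← Matrix.map_add _ (fun a b => map_add f a b), ← idM]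
  have idNc : Mc = Nc + Nc * Mc := by
    rw [hMcd, hNcd, ← Matrix.map_mul, ← Matrix.map_add _ (fun a b => map_add f a b), ← idN]
  constructor
  · intro lam hl
    rw [IsEigen, isRoot_charpoly_iff] at hl ⊢
    obtain ⟨v, hv, hMv⟩ := hl
    change Mc *ᵥ v = lam • v at hMv
    have h := congrArg (fun X => Matrix.mulVec X v) idNc
    simp only [Matrix.add_mulVec] at h
    rw [← Matrix.mulVec_mulVec, hMv, Matrix.mulVec_smul] at h
    have hN : (1 + lam) • Nc.mulVec v = lam • v := by
      rw [add_smul, one_smul]; exact h.symm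
    have h1l : (1 + lam) ≠ 0 := by
      intro h0
      have hlam : lam = -1 := by linear_combination h0
      rw [h0, zero_smul] at hN
      apply hv
      have h2 : lam • v = 0 := hN.symm
      rw [hlam] at h2
      simpa using h2
    refine ⟨v, hv, ?_⟩
    show Nc *ᵥ v = _
    have h3 := congrArg (fun w => (1 + lam)⁻¹ • w) hN
    simp only [smul_smul, inv_mul_cancel₀ h1l, one_smul] at h3
    rw [h3, div_eq_inv_mul]
  · intro mu hm
    rw [IsEigen, isRoot_charpoly_iff] at hm ⊢
    obtain ⟨v, hv, hNv⟩ := hm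
    change Nc *ᵥ v = mu • v at hNv
    have h := congrArg (fun X => Matrix.mulVec X v) idMc
    simp only [Matrix.add_mulVec] at h
    rw [← Matrix.mulVec_mulVec, hNv, Matrix.mulVec_smul] at h
    have hM : (1 - mu) • Mc.mulVec v = mu • v := by
      rw [sub_smul, one_smul]
      exact sub_eq_of_eq_add h
    have h1m : (1 - mu) ≠ 0 := by
      intro h0
      have hmu : mu = 1 := by linear_combination -h0
      rw [h0, zero_smul] at hM
      apply hv
      have h2 : mu • v = 0 := hM.symm
      rw [hmu] at h2
      simpa using h2
    refine ⟨v, hv, ?_⟩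
    show Mc *ᵥ v = _
    have h3 := congrArg (fun w => (1 - mu)⁻¹ • w) hM
    simp only [smul_smul, inv_mul_cancel₀ h1m, one_smul] at h3
    rw [h3, div_eq_inv_mul]
end

section
/- Let A = U - V be a proper weak regular splitting of A ∈ ℝ^{m×n} (i.e., a proper splitting with U† ≥ 0 and U†V ≥ 0 entrywise). Then A† ≥ 0 if and only if the spectral radius ρ(U†V) < 1. -/
open Matrix Polynomial Filter

lemma matrix_eq_of_mulVec {a b : ℕ} {M N : Matrix (Fin a) (Fin b) ℝ}
    (h : ∀ x, M *ᵥ x = N *ᵥ x) : M = N := by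
  ext i j
  have := congrFun (h (Pi.single j 1)) i
  simpa using this

lemma isMP_unique {a b : ℕ} {A : Matrix (Fin a) (Fin b) ℝ} {X Y : Matrix (Fin b) (Fin a) ℝ}
    (hX : IsMP A X) (hY : IsMP A Y) : X = Y := by
  obtain ⟨hx1, hx2, hx3, hx4⟩ := hX
  obtain ⟨hy1, hy2, hy3, hy4⟩ := hY
  have hax : A * X = A * Y := by
    have e1 : A * X = (A * Y) * (A * X) := by
      conv_lhs => rw [← hy1]
      simp only [Matrix.mul_assoc]
    have e2 : (A * Y) * (A * X) = ((A * X) * (A * Y))ᵀ := by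
      rw [transpose_mul, hy3, hx3]
    have e3 : (A * X) * (A * Y) = A * Y := by
      calc (A * X) * (A * Y) = ((A * X) * A) * Y := by simp only [Matrix.mul_assoc]
      _ = A * Y := by rw [hx1]
    rw [e1, e2, e3, hy3]
  have hxa : X * A = Y * A := by
    have e1 : X * A = (X * A) * (Y * A) := by
      conv_lhs => rw [← hy1]
      simp only [Matrix.mul_assoc]
    have e2 : (X * A) * (Y * A) = ((Y * A) * (X * A))ᵀ := by
      rw [transpose_mul, hy4, hx4]
    have e3 : (Y * A) * (X * A) = Y * A := by
      calc (Y * A) * (X * A) = Y * ((A * X) * A) := by simp only [Matrix.mul_assoc]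
      _ = Y * A := by rw [hx1]
    rw [e1, e2, e3, hy4]
  calc X = X * A * X := hx2.symm
  _ = Y := by rw [Matrix.mul_assoc, hax, ← Matrix.mul_assoc, hxa]; exact hy2

lemma charpoly_isRoot_iff {k : ℕ} (M : Matrix (Fin k) (Fin k) ℂ) (μ : ℂ) :
    M.charpoly.IsRoot μ ↔ (μ • (1 : Matrix (Fin k) (Fin k) ℂ) - M).det = 0 := by
  have h1 : (charmatrix M).map (evalRingHom μ) = μ • (1 : Matrix (Fin k) (Fin k) ℂ) - M := by
    ext i j
    by_cases hij : i = j
    · subst hij; simp [charmatrix_apply]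
    · simp [charmatrix_apply, Matrix.one_apply_ne hij, Matrix.diagonal_apply_ne _ hij]
  rw [IsRoot.def, Matrix.charpoly, ← coe_evalRingHom, RingHom.map_det, RingHom.mapMatrix_apply, h1]

lemma entry_nnnorm_le_linfty {k l : ℕ} (M : Matrix (Fin k) (Fin l) ℂ) (p : Fin k) (q : Fin l) :
    letI := Matrix.linftyOpSeminormedAddCommGroup (m := Fin k) (n := Fin l) (α := ℂ)
    ‖M p q‖₊ ≤ ‖M‖₊ := by
  letI := Matrix.linftyOpSeminormedAddCommGroup (m := Fin k) (n := Fin l) (α := ℂ)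
  rw [Matrix.linfty_opNNNorm_def]
  exact le_trans (Finset.single_le_sum (f := fun j => ‖M p j‖₊) (fun _ _ => zero_le)
    (Finset.mem_univ q)) (Finset.le_sup (f := fun i => ∑ j, ‖M i j‖₊) (Finset.mem_univ p))

lemma pow_entry_tendsto_zero {k : ℕ} (T : Matrix (Fin k) (Fin k) ℝ)
    (h : ∀ μ : ℂ, IsEigen T μ → ‖μ‖ < 1) (p q : Fin k) :
    Filter.Tendsto (fun j => (T ^ j) p q) Filter.atTop (nhds 0) := by
  letI : SeminormedRing (Matrix (Fin k) (Fin k) ℂ) := Matrix.linftyOpSemiNormedRing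
  letI : NormedRing (Matrix (Fin k) (Fin k) ℂ) := Matrix.linftyOpNormedRing
  letI : NormedAlgebra ℂ (Matrix (Fin k) (Fin k) ℂ) := Matrix.linftyOpNormedAlgebra
  haveI : Nonempty (Fin k) := ⟨p⟩
  haveI : Nontrivial (Matrix (Fin k) (Fin k) ℂ) :=
    ⟨0, 1, fun h0 => by
      have := congrFun (congrFun h0 p) p
      simp [Matrix.one_apply] at this⟩
  set Tc := T.map (algebraMap ℝ ℂ) with hTc
  have hspec : ∀ z ∈ spectrum ℂ Tc, ‖z‖₊ < 1 := by
    intro μ hμ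
    rw [spectrum.mem_iff] at hμ
    have hdet : (algebraMap ℂ (Matrix (Fin k) (Fin k) ℂ) μ - Tc).det = 0 := by
      by_contra hd
      exact hμ ((Matrix.isUnit_iff_isUnit_det _).mpr (isUnit_iff_ne_zero.mpr hd))
    have hroot : Tc.charpoly.IsRoot μ := by
      rw [charpoly_isRoot_iff]
      rwa [Algebra.algebraMap_eq_smul_one] at hdet
    have habs := h μ hroot
    rw [← NNReal.coe_lt_one]
    simpa using habs
  have hrad : spectralRadius ℂ Tc < 1 := by
    have := spectrum.spectralRadius_lt_of_forall_lt (a := Tc) (r := 1) hspec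
    simpa using this
  obtain ⟨c, hc1, hc2⟩ := ENNReal.lt_iff_exists_nnreal_btwn.mp hrad
  have hcl1 : (c : ℝ) < 1 := by exact_mod_cast hc2
  have hgel := spectrum.pow_nnnorm_pow_one_div_tendsto_nhds_spectralRadius Tc
  have hev : ∀ᶠ j : ℕ in Filter.atTop, (‖Tc ^ j‖₊ : ENNReal) ^ (1 / (j:ℝ)) < (c : ENNReal) :=
    hgel.eventually_lt_const hc1
  have hev2 : ∀ᶠ j : ℕ in Filter.atTop, ‖Tc ^ j‖₊ ≤ c ^ j := by
    filter_upwards [hev, Filter.eventually_ge_atTop 1] with j hj hj1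
    have hj0 : (j : ℝ) ≠ 0 := by positivity
    have := ENNReal.rpow_le_rpow hj.le (by positivity : (0:ℝ) ≤ (j:ℝ))
    rw [← ENNReal.rpow_mul, one_div, inv_mul_cancel₀ hj0, ENNReal.rpow_one,
      ENNReal.rpow_natCast] at this
    exact_mod_cast this
  have hmap : ∀ j : ℕ, Tc ^ j = (T ^ j).map (algebraMap ℝ ℂ) := by
    intro j
    rw [hTc, ← RingHom.mapMatrix_apply, ← RingHom.mapMatrix_apply, map_pow]
  have hbound : ∀ᶠ j : ℕ in Filter.atTop, |(T ^ j) p q| ≤ (c : ℝ) ^ j := by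
    filter_upwards [hev2] with j hj
    have h1 : ‖(Tc ^ j) p q‖₊ ≤ ‖Tc ^ j‖₊ := entry_nnnorm_le_linfty _ p q
    have h2 : ‖(Tc ^ j) p q‖₊ ≤ c ^ j := le_trans h1 hj
    have h3 : ‖(Tc ^ j) p q‖ ≤ (c : ℝ) ^ j := by exact_mod_cast h2
    rw [hmap, Matrix.map_apply] at h3
    simpa [Complex.coe_algebraMap] using h3
  have hc0 : Filter.Tendsto (fun j : ℕ => (c:ℝ)^j) Filter.atTop (nhds 0) :=
    tendsto_pow_atTop_nhds_zero_of_lt_one c.coe_nonneg hcl1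
  have hcneg : Filter.Tendsto (fun j : ℕ => -((c:ℝ)^j)) Filter.atTop (nhds 0) := by
    simpa using hc0.neg
  exact tendsto_of_tendsto_of_tendsto_of_le_of_le' hcneg hc0
    (hbound.mono fun j hj => (abs_le.mp hj).1) (hbound.mono fun j hj => (abs_le.mp hj).2)

lemma commute_nonsing_inv {k : ℕ} {B M : Matrix (Fin k) (Fin k) ℝ} (hd : IsUnit M.det)
    (h : B * M = M * B) : B * M⁻¹ = M⁻¹ * B := by
  have e1 : B * M⁻¹ = M⁻¹ * ((M * B) * M⁻¹) := by
    conv_rhs => rw [Matrix.mul_assoc M B M⁻¹]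
    rw [← Matrix.mul_assoc M⁻¹ M (B * M⁻¹), Matrix.nonsing_inv_mul _ hd, one_mul]
  have e2 : M⁻¹ * ((B * M) * M⁻¹) = M⁻¹ * B := by
    rw [Matrix.mul_assoc B M M⁻¹, Matrix.mul_nonsing_inv _ hd, mul_one]
  rw [e1, ← h, e2]

lemma entryNonneg_mul {a b c : ℕ} {M : Matrix (Fin a) (Fin b) ℝ} {N : Matrix (Fin b) (Fin c) ℝ}
    (hM : EntryNonneg M) (hN : EntryNonneg N) : EntryNonneg (M * N) := by
  intro i j
  rw [Matrix.mul_apply]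
  exact Finset.sum_nonneg fun k _ => mul_nonneg (hM i k) (hN k j)

theorem stmt3 {m n : ℕ} (A U V : Matrix (Fin m) (Fin n) ℝ)
    (Ad : Matrix (Fin n) (Fin m) ℝ) (Ud : Matrix (Fin n) (Fin m) ℝ)
    (hps : ProperSplitting A U V) (hA : IsMP A Ad) (hU : IsMP U Ud)
    (hUd : EntryNonneg Ud) (hUdV : EntryNonneg (Ud * V)) :
    EntryNonneg Ad ↔ specRad (Ud * V) < 1 := by
  obtain ⟨hAUV, hrange, hker⟩ := hps
  have hU1 : U * Ud * U = U := hU.1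
  have hU2 : Ud * U * Ud = Ud := hU.2.1
  have hU3 : (U * Ud)ᵀ = U * Ud := hU.2.2.1
  have hU4 : (Ud * U)ᵀ = Ud * U := hU.2.2.2
  have hV : V = U - A := by rw [hAUV]; abel
  set T := Ud * V with hTdef
  -- A * (Ud * U) = A
  have hAP : A * (Ud * U) = A := by
    apply matrix_eq_of_mulVec
    intro x
    have h1 : U *ᵥ (x - (Ud * U) *ᵥ x) = 0 := by
      rw [Matrix.mulVec_sub, Matrix.mulVec_mulVec, ← Matrix.mul_assoc, hU1, sub_self]
    have hm : (x - (Ud * U) *ᵥ x) ∈ LinearMap.ker U.mulVecLin := by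
      rw [LinearMap.mem_ker, Matrix.mulVecLin_apply]; exact h1
    rw [hker, LinearMap.mem_ker, Matrix.mulVecLin_apply, Matrix.mulVec_sub] at hm
    rw [← Matrix.mulVec_mulVec]
    exact (sub_eq_zero.mp hm).symm
  -- (U * Ud) * A = A
  have hQA : U * Ud * A = A := by
    apply matrix_eq_of_mulVec
    intro x
    have hm : A *ᵥ x ∈ LinearMap.range A.mulVecLin := ⟨x, rfl⟩
    rw [← hrange] at hm
    obtain ⟨y, hy⟩ := hm
    rw [Matrix.mulVecLin_apply] at hy
    rw [← Matrix.mulVec_mulVec, ← hy, Matrix.mulVec_mulVec, hU1]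
  -- A = U * (1 - T)
  have hA_eq : A = U * (1 - T) := by
    rw [Matrix.mul_sub, Matrix.mul_one, hTdef, ← Matrix.mul_assoc, hV, Matrix.mul_sub, hU1, hQA]
    abel
  -- IsUnit (1 - T).det
  have hUnit : IsUnit (1 - T).det := by
    rw [isUnit_iff_ne_zero]
    intro hdet
    obtain ⟨x, hx0, hx⟩ := (Matrix.exists_mulVec_eq_zero_iff).mpr hdet
    have hAx : A *ᵥ x = 0 := by
      rw [hA_eq, ← Matrix.mulVec_mulVec, hx, Matrix.mulVec_zero]
    have hUx : U *ᵥ x = 0 := by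
      have hm : x ∈ LinearMap.ker A.mulVecLin := by
        rw [LinearMap.mem_ker, Matrix.mulVecLin_apply]; exact hAx
      rw [← hker, LinearMap.mem_ker, Matrix.mulVecLin_apply] at hm
      exact hm
    have hVx : V *ᵥ x = 0 := by
      rw [hV, Matrix.sub_mulVec, hUx, hAx, sub_self]
    have hTx : T *ᵥ x = 0 := by
      rw [hTdef, ← Matrix.mulVec_mulVec, hVx, Matrix.mulVec_zero]
    have : x = 0 := by
      have := hx
      rw [Matrix.sub_mulVec, Matrix.one_mulVec, hTx, sub_zero] at this
      exact this
    exact hx0 this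
  set W := (1 - T)⁻¹ with hWdef
  have hW1 : (1 - T) * W = 1 := Matrix.mul_nonsing_inv _ hUnit
  have hW2 : W * (1 - T) = 1 := Matrix.nonsing_inv_mul _ hUnit
  -- commutation facts
  have hTW : T * W = W * T := commute_nonsing_inv hUnit (by noncomm_ring)
  have hPUd : Ud * U * Ud = Ud := hU2
  have hVP : V * (Ud * U) = V := by
    rw [hV, Matrix.sub_mul, hAP, ← Matrix.mul_assoc, hU1]
  have hPT : (Ud * U) * T = T := by
    rw [hTdef, ← Matrix.mul_assoc, hU2]
  have hTP : T * (Ud * U) = T := by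
    rw [hTdef, Matrix.mul_assoc, hVP]
  have hPcomm : (Ud * U) * (1 - T) = (1 - T) * (Ud * U) := by
    rw [mul_sub, sub_mul, mul_one, one_mul, hPT, hTP]
  have hPW : (Ud * U) * W = W * (Ud * U) := commute_nonsing_inv hUnit hPcomm
  -- Ad = W * Ud
  have hAd : Ad = W * Ud := by
    apply isMP_unique hA
    have hAX : A * (W * Ud) = U * Ud := by
      rw [hA_eq]
      calc U * (1 - T) * (W * Ud) = U * (((1 - T) * W) * Ud) := by simp only [Matrix.mul_assoc]
      _ = U * Ud := by rw [hW1, Matrix.one_mul]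
    have hXA : (W * Ud) * (U * (1 - T)) = Ud * U := by
      calc (W * Ud) * (U * (1 - T)) = W * ((Ud * U) * (1 - T)) := by simp only [Matrix.mul_assoc]
      _ = (W * (1 - T)) * (Ud * U) := by rw [hPcomm, ← Matrix.mul_assoc]
      _ = Ud * U := by rw [hW2, one_mul]
    have hXA' : (W * Ud) * A = Ud * U := by rw [hA_eq]; exact hXA
    refine ⟨?_, ?_, ?_, ?_⟩
    · rw [hAX, hQA]
    · calc (W * Ud) * A * (W * Ud) = (Ud * U) * (W * Ud) := by rw [hXA']
      _ = ((Ud * U) * W) * Ud := by simp only [Matrix.mul_assoc]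
      _ = (W * (Ud * U)) * Ud := by rw [hPW]
      _ = W * (Ud * U * Ud) := by simp only [Matrix.mul_assoc]
      _ = W * Ud := by rw [hPUd]
    · rw [hAX]; exact hU3
    · rw [hXA']; exact hU4
  -- recurrence
  have hWrec : W = 1 + T * W := by
    calc W = ((1 - T) + T) * W := by rw [sub_add_cancel, one_mul]
    _ = (1 - T) * W + T * W := by rw [add_mul]
    _ = 1 + T * W := by rw [hW1]
  have hrec : Ad = Ud + T * Ad := by
    rw [hAd]
    conv_lhs => rw [hWrec]
    rw [Matrix.add_mul, Matrix.one_mul, Matrix.mul_assoc]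
  have hsum : ∀ k : ℕ, Ad = (∑ i ∈ Finset.range k, T ^ i) * Ud + T ^ k * Ad := by
    intro k
    induction k with
    | zero => simp
    | succ k ih =>
      calc Ad = (∑ i ∈ Finset.range k, T ^ i) * Ud + T ^ k * Ad := ih
      _ = (∑ i ∈ Finset.range k, T ^ i) * Ud + T ^ k * (Ud + T * Ad) := by rw [← hrec]
      _ = ((∑ i ∈ Finset.range k, T ^ i) * Ud + T ^ k * Ud) + T ^ (k+1) * Ad := by
          rw [Matrix.mul_add, ← Matrix.mul_assoc, ← pow_succ, add_assoc]
      _ = (∑ i ∈ Finset.range (k+1), T ^ i) * Ud + T ^ (k+1) * Ad := by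
          rw [Finset.sum_range_succ, Matrix.add_mul]
  have hTk : ∀ k : ℕ, EntryNonneg (T ^ k) := by
    intro k
    induction k with
    | zero =>
      intro i j
      rw [pow_zero]
      by_cases h : i = j <;> simp [Matrix.one_apply, h]
    | succ k ih =>
      rw [pow_succ]
      exact entryNonneg_mul ih hUdV
  have hTsplit : ∀ k : ℕ, T ^ (k+1) = (T ^ k * Ud) * V := by
    intro k
    rw [pow_succ, Matrix.mul_assoc]
  have hSfin : {r : ℝ | ∃ μ : ℂ, IsEigen T μ ∧ r = ‖μ‖}.Finite := by
    have hfin : {μ : ℂ | ((T.map (algebraMap ℝ ℂ)).charpoly).IsRoot μ}.Finite :=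
      Polynomial.finite_setOf_isRoot (Matrix.charpoly_monic _).ne_zero
    have hset : {r : ℝ | ∃ μ : ℂ, IsEigen T μ ∧ r = ‖μ‖}
        = (fun μ : ℂ => ‖μ‖) '' {μ : ℂ | IsEigen T μ} := by
      ext r
      constructor
      · rintro ⟨μ, h1, h2⟩; exact ⟨μ, h1, h2.symm⟩
      · rintro ⟨μ, h1, h2⟩; exact ⟨μ, h1, h2.symm⟩
    rw [hset]
    exact hfin.image _
  constructor
  · -- EntryNonneg Ad → specRad T < 1
    intro hAdnn
    have hterm : ∀ (p : Fin n) (q : Fin m),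
        Filter.Tendsto (fun k => ((T ^ k * Ud : Matrix (Fin n) (Fin m) ℝ)) p q) Filter.atTop (nhds 0) := by
      intro p q
      have hsummable : Summable fun k => ((T ^ k * Ud : Matrix (Fin n) (Fin m) ℝ)) p q := by
        apply summable_of_sum_range_le (c := Ad p q)
        · intro k; exact entryNonneg_mul (hTk k) hUd p q
        · intro k
          have h := congrFun (congrFun (hsum k) p) q
          rw [Matrix.add_apply] at h
          have h1 : ((∑ i ∈ Finset.range k, T ^ i) * Ud) p q
              = ∑ i ∈ Finset.range k, ((T ^ i * Ud : Matrix (Fin n) (Fin m) ℝ)) p q := by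
            rw [Matrix.sum_mul, Matrix.sum_apply]
          have h2 : 0 ≤ (T ^ k * Ad) p q := entryNonneg_mul (hTk k) hAdnn p q
          rw [h1] at h
          linarith
      exact hsummable.tendsto_atTop_zero
    have hTk0 : ∀ p q, Filter.Tendsto (fun k => (T ^ k) p q) Filter.atTop (nhds 0) := by
      intro p q
      have h1 : Filter.Tendsto (fun k => (T ^ (k + 1)) p q) Filter.atTop (nhds 0) := by
        have he2 : ∀ k : ℕ, (T ^ (k+1)) p q = ∑ j, ((T ^ k * Ud : Matrix (Fin n) (Fin m) ℝ)) p j * V j q := by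
          intro k
          rw [hTsplit k, Matrix.mul_apply]
        simp_rw [he2]
        have := tendsto_finset_sum (Finset.univ : Finset (Fin m))
          (fun j _ => (hterm p j).mul_const (V j q))
        simpa using this
      exact (Filter.tendsto_add_atTop_iff_nat 1).mp h1
    have heig : ∀ μ : ℂ, IsEigen T μ → ‖μ‖ < 1 := by
      intro μ hμ
      rw [IsEigen, charpoly_isRoot_iff] at hμ
      obtain ⟨x, hx0, hx⟩ := (Matrix.exists_mulVec_eq_zero_iff).mpr hμ
      have hxe : (T.map (algebraMap ℝ ℂ)) *ᵥ x = μ • x := by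
        rw [Matrix.sub_mulVec, Matrix.smul_mulVec, Matrix.one_mulVec] at hx
        exact (sub_eq_zero.mp hx).symm
      have hxk : ∀ k : ℕ, (T.map (algebraMap ℝ ℂ)) ^ k *ᵥ x = μ ^ k • x := by
        intro k
        induction k with
        | zero => simp [Matrix.one_mulVec]
        | succ k ih =>
          rw [pow_succ', ← Matrix.mulVec_mulVec, ih, Matrix.mulVec_smul, hxe, smul_smul, ← pow_succ]
      obtain ⟨i, hi⟩ := Function.ne_iff.mp hx0
      have hmap : ∀ k : ℕ, (T.map (algebraMap ℝ ℂ)) ^ k = (T ^ k).map (algebraMap ℝ ℂ) := by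
        intro k
        rw [← RingHom.mapMatrix_apply, ← RingHom.mapMatrix_apply, map_pow]
      have hTci : Filter.Tendsto (fun k => (((T.map (algebraMap ℝ ℂ)) ^ k) *ᵥ x) i)
          Filter.atTop (nhds 0) := by
        have he : ∀ k : ℕ, (((T.map (algebraMap ℝ ℂ)) ^ k) *ᵥ x) i
            = ∑ j, (((T ^ k) i j : ℝ) : ℂ) * x j := by
          intro k
          rw [hmap]
          simp [Matrix.mulVec, dotProduct, Matrix.map_apply, Complex.coe_algebraMap]
        simp_rw [he]
        have h0 : ∀ j : Fin n, Filter.Tendsto (fun k => (((T ^ k) i j : ℝ) : ℂ) * x j)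
            Filter.atTop (nhds 0) := by
          intro j
          have hc : Filter.Tendsto (fun k => (((T ^ k) i j : ℝ) : ℂ)) Filter.atTop (nhds 0) := by
            rw [show ((0:ℂ)) = (((0:ℝ)):ℂ) by norm_num]
            exact (Complex.continuous_ofReal.tendsto 0).comp (hTk0 i j)
          simpa using hc.mul_const (x j)
        have := tendsto_finset_sum (Finset.univ : Finset (Fin n)) (fun j _ => h0 j)
        simpa using this
      have hμx : Filter.Tendsto (fun k => μ ^ k * x i) Filter.atTop (nhds 0) := by
        have he : (fun k : ℕ => μ ^ k * x i) = fun k => (((T.map (algebraMap ℝ ℂ)) ^ k) *ᵥ x) i := by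
          funext k
          rw [hxk k]
          simp [Pi.smul_apply, smul_eq_mul]
        rw [he]
        exact hTci
      have hxi : ‖x i‖ ≠ 0 := by simpa using hi
      have habs : Filter.Tendsto (fun k => ‖μ‖ ^ k) Filter.atTop (nhds 0) := by
        have h2 : Filter.Tendsto (fun k => ‖μ ^ k * x i‖) Filter.atTop (nhds 0) := by
          simpa using hμx.norm
        have h3 := h2.div_const (‖x i‖)
        have he : (fun k => ‖μ ^ k * x i‖ / ‖x i‖)
            = fun k => ‖μ‖ ^ k := by
          funext k
          rw [norm_mul, norm_pow, mul_div_cancel_right₀ _ hxi]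
        rw [he] at h3
        simpa using h3
      have := tendsto_pow_atTop_nhds_zero_iff.mp habs
      rwa [abs_of_nonneg (norm_nonneg _)] at this
    rcases Set.eq_empty_or_nonempty {r : ℝ | ∃ μ : ℂ, IsEigen T μ ∧ r = ‖μ‖} with hS | hS
    · show sSup {r : ℝ | ∃ μ : ℂ, IsEigen T μ ∧ r = ‖μ‖} < 1
      rw [hS, Real.sSup_empty]
      norm_num
    · obtain ⟨μ, hμ, hr⟩ := hS.csSup_mem hSfin
      show sSup {r : ℝ | ∃ μ : ℂ, IsEigen T μ ∧ r = ‖μ‖} < 1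
      rw [hr]
      exact heig μ hμ
  · -- specRad T < 1 → EntryNonneg Ad
    intro hspec
    have hspec' : sSup {r : ℝ | ∃ μ : ℂ, IsEigen T μ ∧ r = ‖μ‖} < 1 := hspec
    have hroots : ∀ μ : ℂ, IsEigen T μ → ‖μ‖ < 1 := by
      intro μ hμ
      have hmem : ‖μ‖ ∈ {r : ℝ | ∃ μ : ℂ, IsEigen T μ ∧ r = ‖μ‖} :=
        ⟨μ, hμ, rfl⟩
      exact lt_of_le_of_lt (le_csSup hSfin.bddAbove hmem) hspec'
    have hTk0 := pow_entry_tendsto_zero T hroots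
    have hWsum : ∀ k : ℕ, W = (∑ i ∈ Finset.range k, T ^ i) + T ^ k * W := by
      intro k
      induction k with
      | zero => simp
      | succ k ih =>
        calc W = (∑ i ∈ Finset.range k, T ^ i) + T ^ k * W := ih
        _ = (∑ i ∈ Finset.range k, T ^ i) + T ^ k * (1 + T * W) := by rw [← hWrec]
        _ = ((∑ i ∈ Finset.range k, T ^ i) + T ^ k) + T ^ (k+1) * W := by
            rw [mul_add, mul_one, ← mul_assoc, ← pow_succ, add_assoc]
        _ = (∑ i ∈ Finset.range (k+1), T ^ i) + T ^ (k+1) * W := by rw [Finset.sum_range_succ]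
    have hW0 : ∀ p q, 0 ≤ W p q := by
      intro p q
      have hTkW : Filter.Tendsto (fun k => ((T ^ k * W : Matrix (Fin n) (Fin n) ℝ)) p q) Filter.atTop (nhds 0) := by
        have he : ∀ k : ℕ, ((T ^ k * W : Matrix (Fin n) (Fin n) ℝ)) p q = ∑ j, (T ^ k) p j * W j q := by
          intro k; rw [Matrix.mul_apply]
        simp_rw [he]
        have := tendsto_finset_sum (Finset.univ : Finset (Fin n))
          (fun j _ => (hTk0 p j).mul_const (W j q))
        simpa using this
      have hSk : ∀ k : ℕ, 0 ≤ (∑ i ∈ Finset.range k, T ^ i) p q := by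
        intro k
        rw [Matrix.sum_apply]
        exact Finset.sum_nonneg fun i _ => hTk i p q
      have hlim : Filter.Tendsto (fun k => (∑ i ∈ Finset.range k, T ^ i) p q)
          Filter.atTop (nhds (W p q)) := by
        have he : ∀ k : ℕ, (∑ i ∈ Finset.range k, T ^ i) p q = W p q - ((T ^ k * W : Matrix (Fin n) (Fin n) ℝ)) p q := by
          intro k
          have h := congrFun (congrFun (hWsum k) p) q
          rw [Matrix.add_apply] at h
          linarith
        simp_rw [he]
        simpa using (tendsto_const_nhds.sub hTkW)
      exact ge_of_tendsto hlim (Filter.Eventually.of_forall hSk)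
    rw [hAd]
    exact entryNonneg_mul hW0 hUd
end
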